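/- arXiv:math/0502214 — 2 statements merged into one kernel-verified Lean document; each statement's English description precedes it below -/
import Mathlib

section
/- For every odd prime p, there exists a quadratic nonresidue z modulo p with 1 < z < √p + 1, i.e., the least positive quadratic nonresidue modulo p is less than √p + 1. -/
theorem exists_small_nonresidue (p : ℕ) (hp : p.Prime) (hodd : Odd p) :
    ∃ z : ℕ, 1 < z ∧ (z : ℝ) < Real.sqrt p + 1 ∧ ¬ IsSquare (z : ZMod p) := by
  haveI : Fact p.Prime := ⟨hp⟩
  have hp2 : p ≠ 2 := by rintro rfl; exact (by norm_num : ¬ Odd 2) hodd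
  have hp3 : 3 ≤ p := by have := hp.two_le; omega
  have hchar : ringChar (ZMod p) ≠ 2 := by rw [ZMod.ringChar_zmod_n]; exact hp2
  obtain ⟨a, ha⟩ := FiniteField.exists_nonsquare hchar
  have haval : ¬ IsSquare ((a.val : ZMod p)) := by
    rwa [ZMod.natCast_val a, ZMod.cast_id]
  have hex : ∃ z : ℕ, ¬ IsSquare ((z : ZMod p)) := ⟨a.val, haval⟩
  classical
  set n := Nat.find hex with hn
  have hns : ¬ IsSquare ((n : ZMod p)) := Nat.find_spec hex
  have hmin : ∀ k < n, IsSquare ((k : ZMod p)) := fun k hk => by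
    by_contra h; exact absurd (Nat.find_le h) (Nat.not_le.mpr hk)
  have hn2 : 2 ≤ n := by
    by_contra h
    push_neg at h
    interval_cases n
    · exact hns ⟨0, by simp⟩
    · exact hns ⟨1, by simp⟩
  have hnp : n < p := lt_of_le_of_lt (Nat.find_le haval) (ZMod.val_lt a)
  -- n does not divide p
  have hnd : ¬ n ∣ p := fun h => by
    rcases (Nat.Prime.eq_one_or_self_of_dvd hp n h) with h1 | h1 <;> omega
  obtain ⟨q, r, hqr, hrn⟩ : ∃ q r, p = n * q + r ∧ r < n :=
    ⟨p / n, p % n, (Nat.div_add_mod p n).symm, Nat.mod_lt _ (by omega)⟩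
  have hr1 : 1 ≤ r := by
    rcases Nat.eq_zero_or_pos r with h | h
    · exact absurd ⟨q, by omega⟩ hnd
    · exact h
  set m := q + 1 with hm
  have hnm : n * m = p + (n - r) := by
    have h1 : n * m = n * q + n := by rw [hm, Nat.mul_add, Nat.mul_one]
    omega
  -- n * m is a square mod p
  have hsq : IsSquare ((n : ZMod p) * (m : ZMod p)) := by
    have h1 : ((n * m : ℕ) : ZMod p) = ((n - r : ℕ) : ZMod p) := by
      rw [hnm]; push_cast; simp
    have h2 : IsSquare (((n - r : ℕ) : ZMod p)) := hmin _ (by omega)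
    rw [← Nat.cast_mul]; rwa [h1]
  -- m is not a square mod p
  have hmp : m < p := by nlinarith
  have hm0 : (m : ZMod p) ≠ 0 := by
    have hnd2 : ¬ p ∣ m := by
      intro h
      have := Nat.le_of_dvd (by omega) h
      omega
    simpa [ZMod.natCast_eq_zero_iff] using hnd2
  have hmns : ¬ IsSquare ((m : ZMod p)) := by
    rintro ⟨b, hb⟩
    obtain ⟨c, hc⟩ := hsq
    apply hns
    have hb0 : b ≠ 0 := by rintro rfl; simp at hb; exact hm0 hb
    refine ⟨c * b⁻¹, ?_⟩
    have : (n : ZMod p) * (b * b) = c * c := by rw [← hb, ← hc]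
    field_simp
    rw [sq, sq, ← this]
  have hnm' : n ≤ m := Nat.find_le hmns
  -- n * (n-1) < p
  have hkey : n * n < p + n := by
    calc n * n ≤ n * m := Nat.mul_le_mul_left n hnm'
    _ = p + (n - r) := hnm
    _ < p + n := by omega
  obtain ⟨k, hn1⟩ : ∃ k, n = k + 1 := ⟨n - 1, by omega⟩
  have h' : (k + 1) * (k + 1) < p + (k + 1) := by rw [← hn1]; exact hkey
  have hk2 : k * k < p := by nlinarith
  have hkR : (k : ℝ) < Real.sqrt p := by
    rw [Real.lt_sqrt (by positivity)]
    have : ((k * k : ℕ) : ℝ) < p := by exact_mod_cast hk2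
    push_cast at this
    nlinarith
  refine ⟨n, by omega, ?_, hns⟩
  rw [hn1]
  push_cast
  linarith
end

section
/- Let F_q ⊆ F_{q^n} be an extension of finite fields of odd characteristic, let {α₀, ..., α_{n−1}} be a basis of F_{q^n} over F_q, and let T be the n×n trace matrix with entries T_{ij} = Tr(α_i α_j), where Tr : F_{q^n} → F_q is the trace. Then det(T) is a nonzero element of F_q, and det(T) is a square in F_q if n is odd, and a nonsquare in F_q if n is even. -/
open Polynomial Finset in
theorem trace_matrix_det_square_iff
    (F K : Type*) [Field F] [Field K] [Fintype F] [Fintype K]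
    [Algebra F K] (hchar : Odd (ringChar F)) (n : ℕ)
    (b : Module.Basis (Fin n) F K)
    (T : Matrix (Fin n) (Fin n) F)
    (hT : ∀ i j, T i j = Algebra.trace F K (b i * b j)) :
    T.det ≠ 0 ∧ (Odd n → IsSquare T.det) ∧ (Even n → ¬ IsSquare T.det) := by
  classical
  haveI : FiniteDimensional F K := Module.Finite.of_basis b
  have hfinrank : Module.finrank F K = n := by
    rw [Module.finrank_eq_card_basis b, Fintype.card_fin]
  have hn0 : n ≠ 0 := by
    rintro rfl
    have := Module.finrank_pos (R := F) (M := K)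
    omega
  set q := Fintype.card F with hqdef
  have hq1 : 1 < q := Fintype.one_lt_card
  -- characteristic
  set p := ringChar F with hpdef
  haveI : CharP F p := ringChar.charP F
  haveI hpK : CharP K p := charP_of_injective_algebraMap' F (A := K) p
  have hp : p.Prime := CharP.char_is_prime F p
  haveI : Fact p.Prime := ⟨hp⟩
  obtain ⟨m, -, hFq⟩ := FiniteField.card F p
  -- the Frobenius x ↦ x ^ q as F-algebra equivalence of K
  haveI : ExpChar K p := ExpChar.prime hp
  let ψ : K →+* K := iterateFrobenius K p m
  have hψ : ∀ x : K, ψ x = x ^ q := by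
    intro x
    show x ^ p ^ (m : ℕ) = x ^ q
    rw [hqdef, hFq]
  let φ' : K →ₐ[F] K :=
    { toRingHom := ψ
      commutes' := fun r => by
        show (algebraMap F K r) ^ p ^ (m : ℕ) = algebraMap F K r
        rw [← hFq, ← map_pow, FiniteField.pow_card] }
  let φ : K ≃ₐ[F] K := AlgEquiv.ofBijective φ'
    ((Finite.injective_iff_bijective).1 φ'.toRingHom.injective)
  have hφ : ∀ x : K, φ x = x ^ q := hψ
  have hφk : ∀ (k : ℕ) (x : K), (φ ^ k) x = x ^ q ^ k := by
    intro k
    induction k with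
    | zero => intro x; simp
    | succ k ih =>
      intro x
      rw [pow_succ, AlgEquiv.mul_apply, hφ x, ih, ← pow_mul, pow_succ']
  have hcardK : Fintype.card K = q ^ n := by
    rw [hqdef, ← hfinrank]; exact Module.card_eq_pow_finrank
  have hpowK : ∀ x : K, x ^ q ^ n = x := by
    intro x; rw [← hcardK]; exact FiniteField.pow_card x
  have hφn : φ ^ n = 1 := by
    ext x
    rw [hφk]; exact hpowK x
  -- all elements of K are roots ⇒ contradiction tool
  have hno : ∀ d : ℕ, d ≠ 0 → d < n → ∃ x : K, x ^ q ^ d ≠ x := by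
    intro d hd0 hdn
    by_contra h
    push_neg at h
    have hne : (X ^ q ^ d - X : K[X]) ≠ 0 :=
      FiniteField.X_pow_card_sub_X_ne_zero K (Nat.one_lt_pow hd0 hq1)
    have hdeg : (X ^ q ^ d - X : K[X]).natDegree = q ^ d :=
      FiniteField.X_pow_card_sub_X_natDegree_eq K (Nat.one_lt_pow hd0 hq1)
    have := Polynomial.eq_zero_of_natDegree_lt_card_of_eval_eq_zero'
      (X ^ q ^ d - X : K[X]) Finset.univ
      (fun x _ => by simp [h x])
      (by rw [hdeg, Finset.card_univ, hcardK]
          exact Nat.pow_lt_pow_right hq1 hdn)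
    exact hne this
  -- powers of φ are distinct
  have hinj : Function.Injective (fun k : Fin n => φ ^ (k : ℕ)) := by
    have key : ∀ i j : Fin n, (i : ℕ) < (j : ℕ) → φ ^ (i : ℕ) ≠ φ ^ (j : ℕ) := by
      intro i j hij heq
      have heq' : φ ^ (i : ℕ) = φ ^ (j : ℕ) := heq
      have hd : φ ^ ((j : ℕ) - i) = 1 := by
        have h2 : φ ^ ((j : ℕ) - i) * φ ^ (i : ℕ) = 1 * φ ^ (i : ℕ) := by
          rw [← pow_add, one_mul, (by omega : (j : ℕ) - i + i = (j : ℕ))]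
          exact heq'.symm
        exact mul_right_cancel h2
      obtain ⟨x, hx⟩ := hno ((j : ℕ) - i) (by omega) (by omega)
      exact hx (by rw [← hφk, hd]; rfl)
    intro i j hij
    rcases lt_trichotomy (i : ℕ) (j : ℕ) with h | h | h
    · exact absurd hij (key i j h)
    · exact Fin.ext h
    · exact absurd hij.symm (key j i h)
  have hbij : Function.Bijective (fun k : Fin n => φ ^ (k : ℕ)) := by
    refine (Fintype.bijective_iff_injective_and_card _).2 ⟨hinj, ?_⟩
    rw [Fintype.card_fin, ← Nat.card_eq_fintype_card, IsGalois.card_aut_eq_finrank, hfinrank]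
  -- trace formula
  have htr : ∀ x : K, algebraMap F K (Algebra.trace F K x)
      = ∑ k : Fin n, x ^ q ^ (k : ℕ) := by
    intro x
    rw [trace_eq_sum_automorphisms]
    exact (Fintype.sum_bijective _ hbij (fun k : Fin n => x ^ q ^ (k : ℕ))
      (fun σ => σ x) (fun k => (hφk k x).symm)).symm
  -- the matrix M
  set M : Matrix (Fin n) (Fin n) K :=
    Matrix.of (fun i j : Fin n => b i ^ q ^ (j : ℕ)) with hM
  have hTmap : T.map (algebraMap F K) = M * M.transpose := by
    ext i j
    rw [Matrix.map_apply, hT, htr, Matrix.mul_apply]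
    congr 1
    ext k
    rw [hM]
    simp [Matrix.transpose_apply, mul_pow]
  have hdet2 : algebraMap F K T.det = M.det ^ 2 := by
    rw [RingHom.map_det, RingHom.mapMatrix_apply, hTmap, Matrix.det_mul,
      Matrix.det_transpose, sq]
  -- T.det ≠ 0
  have hTtm : T = Algebra.traceMatrix F b := by
    ext i j
    rw [hT, Algebra.traceMatrix_apply, Algebra.traceForm_apply]
  have hTdet : T.det ≠ 0 := by
    rw [hTtm]
    exact Algebra.discr_not_zero_of_basis F b
  have hMdet : M.det ≠ 0 := by
    intro h
    apply hTdet
    have h0 : algebraMap F K T.det = algebraMap F K 0 := by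
      rw [hdet2, h, map_zero]; ring
    exact (algebraMap F K).injective h0
  -- Frobenius action on det M
  obtain ⟨n', rfl⟩ : ∃ n', n = n' + 1 := ⟨n - 1, by omega⟩
  have hmod : ∀ (x : K) (k : ℕ), x ^ q ^ (k % (n' + 1)) = x ^ q ^ k := by
    intro x k
    rw [← hφk, ← hφk, ← pow_eq_pow_mod k hφn]
  have hfrobM : ψ M.det = (-1 : K) ^ n' * M.det := by
    have hmap : M.map ψ = M.submatrix id (finRotate (n' + 1)) := by
      ext i j
      rw [Matrix.map_apply, Matrix.submatrix_apply, hM, hψ]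
      show (b i ^ q ^ (j : ℕ)) ^ q = b i ^ q ^ ((finRotate (n' + 1) j : ℕ))
      have hval : ((finRotate (n' + 1) j : Fin (n' + 1)) : ℕ) = ((j : ℕ) + 1) % (n' + 1) := by
        rw [finRotate_succ_apply, Fin.val_add, Fin.val_one']
        simp [Nat.add_mod]
      rw [hval, hmod, ← pow_mul, ← pow_succ]
    rw [RingHom.map_det, RingHom.mapMatrix_apply, hmap, Matrix.det_permute',
      sign_finRotate]
    push_cast
    ring
  -- fixed points of Frobenius are in F
  have hfix : ∀ x : K, x ^ q = x → ∃ y : F, algebraMap F K y = x := by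
    intro x hx
    have hsub : (Finset.univ.image (algebraMap F K)) ⊆
        Finset.univ.filter (fun z : K => z ^ q = z) := by
      intro z hz
      simp only [Finset.mem_image] at hz
      obtain ⟨y, -, rfl⟩ := hz
      simp only [Finset.mem_filter, Finset.mem_univ, true_and]
      rw [← map_pow, FiniteField.pow_card]
    have hcard : (Finset.univ.filter (fun z : K => z ^ q = z)).card ≤
        (Finset.univ.image (algebraMap F K)).card := by
      rw [Finset.card_image_of_injective _ (algebraMap F K).injective,
        Finset.card_univ]
      have hsub2 : (Finset.univ.filter (fun z : K => z ^ q = z)) ⊆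
          (X ^ q - X : K[X]).roots.toFinset := by
        intro z hz
        simp only [Finset.mem_filter] at hz
        rw [Multiset.mem_toFinset, Polynomial.mem_roots
          (FiniteField.X_pow_card_sub_X_ne_zero K hq1)]
        simp [Polynomial.IsRoot, hz.2]
      calc (Finset.univ.filter (fun z : K => z ^ q = z)).card
          ≤ (X ^ q - X : K[X]).roots.toFinset.card := Finset.card_le_card hsub2
        _ ≤ Multiset.card (X ^ q - X : K[X]).roots := Multiset.toFinset_card_le _
        _ ≤ (X ^ q - X : K[X]).natDegree := Polynomial.card_roots' _
        _ = q := FiniteField.X_pow_card_sub_X_natDegree_eq K hq1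
    have heqset := Finset.eq_of_subset_of_card_le hsub hcard
    have hx' : x ∈ Finset.univ.filter (fun z : K => z ^ q = z) := by
      simp [hx]
    rw [← heqset, Finset.mem_image] at hx'
    obtain ⟨y, -, hy⟩ := hx'
    exact ⟨y, hy⟩
  refine ⟨hTdet, ?_, ?_⟩
  · -- n odd
    intro hodd
    have hev : Even n' := by
      rcases hodd with ⟨t, ht⟩; exact ⟨t, by omega⟩
    have : ψ M.det = M.det := by rw [hfrobM, hev.neg_one_pow, one_mul]
    rw [hψ] at this
    obtain ⟨y, hy⟩ := hfix _ this
    refine ⟨y, ?_⟩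
    have : algebraMap F K (y * y) = algebraMap F K T.det := by
      rw [map_mul, hy, hdet2, sq]
    exact ((algebraMap F K).injective this).symm
  · -- n even
    intro hev hsq
    obtain ⟨y, hy⟩ := hsq
    have hodd' : Odd n' := by
      rcases hev with ⟨t, ht⟩
      refine ⟨t - 1, by omega⟩
    have h2 : M.det * M.det = algebraMap F K y * algebraMap F K y := by
      rw [← sq, ← hdet2, hy, map_mul]
    have h3 : M.det = algebraMap F K y ∨ M.det = -(algebraMap F K y) :=
      mul_self_eq_mul_self_iff.1 h2
    have hfixed : ψ M.det = M.det := by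
      rcases h3 with h | h <;> rw [h, hψ]
      · rw [← map_pow, FiniteField.pow_card]
      · rw [neg_pow, ← map_pow, FiniteField.pow_card]
        have : Odd q := by
          rw [hqdef, hFq]
          exact hchar.pow
        rw [this.neg_one_pow]
        ring
    rw [hfrobM, hodd'.neg_one_pow] at hfixed
    have h2M : (2 : K) * M.det = 0 := by linear_combination -hfixed
    have h2ne : (2 : K) ≠ 0 := by
      apply Ring.two_ne_zero
      have : ringChar K = p := ringChar.eq K p
      rw [this]
      intro h
      rw [h] at hchar
      exact (Nat.not_odd_iff_even.2 even_two) hchar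
    rcases mul_eq_zero.1 h2M with h | h
    · exact h2ne h
    · exact hMdet h
end
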